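/- Let (A_n)_{n≥1} be a sequence of nonzero d×d complex matrices such that P_n ≠ 0 for every n. If the sequence n ↦ P_n/‖P_n‖ converges, then there exist a nonzero row vector r ∈ ℂ^d and a sequence of positive reals (λ_n) such that r·(A_n/‖A_n‖ − λ_n I_d) → 0 as n → ∞, where I_d is the d×d identity matrix; one may take λ_n := ‖P_n‖/(‖P_{n−1}‖·‖A_n‖). -/

import Mathlib

open Filter Matrix

/-- `‖X‖`: sum of the moduli of the entries of a complex matrix. -/
noncomputable def matEntrySumNorm {d : ℕ} (M : Matrix (Fin d) (Fin d) ℂ) : ℝ :=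
  ∑ i, ∑ j, ‖M i j‖

/-- `P_n = A_1 ⋯ A_n` (ordered product), `P_0 = I`. -/
noncomputable def matProd {d : ℕ} (A : ℕ → Matrix (Fin d) (Fin d) ℂ) (n : ℕ) :
    Matrix (Fin d) (Fin d) ℂ :=
  ((List.range n).map fun i => A (i + 1)).prod

/-- The specific scalars `λ_n = ‖P_n‖/(‖P_{n−1}‖·‖A_n‖)`. -/
noncomputable def lamSeq {d : ℕ} (A : ℕ → Matrix (Fin d) (Fin d) ℂ) (n : ℕ) : ℝ :=
  matEntrySumNorm (matProd A n) /
    (matEntrySumNorm (matProd A (n - 1)) * matEntrySumNorm (A n))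

lemma mesn_nonneg {d : ℕ} (M : Matrix (Fin d) (Fin d) ℂ) : 0 ≤ matEntrySumNorm M :=
  Finset.sum_nonneg fun _ _ => Finset.sum_nonneg fun _ _ => norm_nonneg _

lemma mesn_entry_le {d : ℕ} (M : Matrix (Fin d) (Fin d) ℂ) (i j : Fin d) :
    ‖M i j‖ ≤ matEntrySumNorm M := by
  calc ‖M i j‖ ≤ ∑ j', ‖M i j'‖ :=
        Finset.single_le_sum (f := fun j' => ‖M i j'‖)
          (fun _ _ => norm_nonneg _) (Finset.mem_univ j)
    _ ≤ matEntrySumNorm M :=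
        Finset.single_le_sum
          (f := fun i' => ∑ j', ‖M i' j'‖)
          (fun _ _ => Finset.sum_nonneg fun _ _ => norm_nonneg _)
          (Finset.mem_univ i)

lemma mesn_pos {d : ℕ} {M : Matrix (Fin d) (Fin d) ℂ} (h : M ≠ 0) :
    0 < matEntrySumNorm M := by
  have : ∃ i j, M i j ≠ 0 := by
    by_contra hc
    push_neg at hc
    exact h (by ext i j; simpa using hc i j)
  obtain ⟨i, j, hij⟩ := this
  exact lt_of_lt_of_le (norm_pos_iff.mpr hij) (mesn_entry_le M i j)

lemma mesn_smul {d : ℕ} (c : ℝ) (M : Matrix (Fin d) (Fin d) ℂ) :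
    matEntrySumNorm (c • M) = |c| * matEntrySumNorm M := by
  unfold matEntrySumNorm
  rw [Finset.mul_sum]
  refine Finset.sum_congr rfl fun i _ => ?_
  rw [Finset.mul_sum]
  refine Finset.sum_congr rfl fun j _ => ?_
  rw [Matrix.smul_apply, Complex.real_smul, norm_mul, Complex.norm_real, Real.norm_eq_abs]

lemma mesn_mul_le {d : ℕ} (M N : Matrix (Fin d) (Fin d) ℂ) :
    matEntrySumNorm (M * N) ≤ matEntrySumNorm M * matEntrySumNorm N := by
  unfold matEntrySumNorm
  calc ∑ i, ∑ j, ‖(M * N) i j‖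
      ≤ ∑ i, ∑ j, ∑ k, ‖M i k‖ * ‖N k j‖ := by
        refine Finset.sum_le_sum fun i _ => Finset.sum_le_sum fun j _ => ?_
        rw [Matrix.mul_apply]
        refine le_trans (norm_sum_le _ _) ?_
        exact le_of_eq (Finset.sum_congr rfl fun k _ => norm_mul _ _)
    _ = ∑ i, ∑ k, ‖M i k‖ * ∑ j, ‖N k j‖ := by
        refine Finset.sum_congr rfl fun i _ => ?_
        rw [Finset.sum_comm]
        exact Finset.sum_congr rfl fun k _ => (Finset.mul_sum _ _ _).symm
    _ ≤ ∑ i, ∑ k, ‖M i k‖ * (∑ k', ∑ j, ‖N k' j‖) := by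
        refine Finset.sum_le_sum fun i _ => Finset.sum_le_sum fun k _ => ?_
        refine mul_le_mul_of_nonneg_left ?_ (norm_nonneg _)
        exact Finset.single_le_sum
          (f := fun k' => ∑ j, ‖N k' j‖)
          (fun _ _ => Finset.sum_nonneg fun _ _ => norm_nonneg _)
          (Finset.mem_univ k)
    _ = (∑ i, ∑ k, ‖M i k‖) * (∑ k', ∑ j, ‖N k' j‖) := by
        rw [Finset.sum_mul]
        exact Finset.sum_congr rfl fun i _ => (Finset.sum_mul _ _ _).symm

lemma matProd_succ {d : ℕ} (A : ℕ → Matrix (Fin d) (Fin d) ℂ) (n : ℕ) :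
    matProd A (n + 1) = matProd A n * A (n + 1) := by
  unfold matProd
  rw [List.range_succ, List.map_append, List.prod_append]
  simp

/-- Lemma 3.2: if `P_n/‖P_n‖` converges, then there is a nonzero row
vector `r` with `r·(A_n/‖A_n‖ − λ_n I) → 0`, where the positive reals `λ_n` may be
taken to be `λ_n = ‖P_n‖/(‖P_{n−1}‖·‖A_n‖)`. -/
theorem row_vector_almost_left_eigen_of_converges {d : ℕ}
    (A : ℕ → Matrix (Fin d) (Fin d) ℂ)
    (hA : ∀ n, A n ≠ 0)
    (hP : ∀ n, matProd A n ≠ 0)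
    (Q : Matrix (Fin d) (Fin d) ℂ)
    (hconv : Tendsto (fun n => (matEntrySumNorm (matProd A n))⁻¹ • matProd A n)
      atTop (nhds Q)) :
    ∃ r : Fin d → ℂ, r ≠ 0 ∧
      (∀ n : ℕ, 0 < lamSeq A n) ∧
      Tendsto
        (fun n => r ᵥ* ((matEntrySumNorm (A n))⁻¹ • A n -
          ((lamSeq A n : ℂ) • (1 : Matrix (Fin d) (Fin d) ℂ))))
        atTop (nhds 0) := by
  have hNP : ∀ n, 0 < matEntrySumNorm (matProd A n) := fun n => mesn_pos (hP n)
  have hNA : ∀ n, 0 < matEntrySumNorm (A n) := fun n => mesn_pos (hA n)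
  have hlam : ∀ n, 0 < lamSeq A n := fun n =>
    div_pos (hNP n) (mul_pos (hNP (n - 1)) (hNA n))
  set Qn : ℕ → Matrix (Fin d) (Fin d) ℂ :=
    fun n => (matEntrySumNorm (matProd A n))⁻¹ • matProd A n with hQndef
  have hentry : ∀ i k, Tendsto (fun n => Qn n i k) atTop (nhds (Q i k)) := by
    intro i k
    have hc : Continuous fun M : Matrix (Fin d) (Fin d) ℂ => M i k :=
      (continuous_apply k).comp (continuous_apply i)
    exact (hc.tendsto Q).comp hconv
  have hQnorm1 : ∀ n, matEntrySumNorm (Qn n) = 1 := by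
    intro n
    rw [hQndef, mesn_smul, abs_of_pos (inv_pos.mpr (hNP n)), inv_mul_cancel₀ (hNP n).ne']
  have hNQ : matEntrySumNorm Q = 1 := by
    have h1 : Tendsto (fun n => matEntrySumNorm (Qn n)) atTop (nhds (matEntrySumNorm Q)) := by
      unfold matEntrySumNorm
      exact tendsto_finset_sum _ fun i _ => tendsto_finset_sum _ fun j _ =>
        (continuous_norm.tendsto _).comp (hentry i j)
    have h2 : Tendsto (fun n => matEntrySumNorm (Qn n)) atTop (nhds 1) := by
      simp only [hQnorm1]
      exact tendsto_const_nhds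
    exact tendsto_nhds_unique h1 h2
  have hQne : Q ≠ 0 := by
    intro h
    rw [h] at hNQ
    simp [matEntrySumNorm] at hNQ
  obtain ⟨i₀, hi₀⟩ : ∃ i, Q i ≠ 0 := Function.ne_iff.mp hQne
  refine ⟨Q i₀, hi₀, hlam, ?_⟩
  rw [tendsto_pi_nhds]
  intro j
  apply squeeze_zero_norm'
    (a := fun n => (∑ k, ‖Q i₀ k - Qn (n - 1) i₀ k‖) +
      ‖Qn n i₀ j - Q i₀ j‖)
  · filter_upwards [eventually_ge_atTop 1] with n hn
    obtain ⟨m, rfl⟩ : ∃ m, n = m + 1 := ⟨n - 1, (Nat.succ_pred_eq_of_pos hn).symm⟩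
    simp only [Nat.add_sub_cancel]
    set B : Matrix (Fin d) (Fin d) ℂ := (matEntrySumNorm (A (m + 1)))⁻¹ • A (m + 1) with hBdef
    set lam : ℝ := lamSeq A (m + 1) with hlamdef
    -- key matrix identity
    have hkeyM : Qn m * B = lam • Qn (m + 1) := by
      rw [hQndef, hBdef, smul_mul_assoc, mul_smul_comm, smul_smul, smul_smul,
        ← matProd_succ]
      congr 1
      have ha := (hNP m).ne'
      have hb := (hNA (m + 1)).ne'
      have hc := (hNP (m + 1)).ne'
      rw [hlamdef]
      simp only [lamSeq, Nat.add_sub_cancel]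
      field_simp
    have hkeyE : ∑ k, Qn m i₀ k * B k j = (lam : ℂ) * Qn (m + 1) i₀ j := by
      have h := congrFun (congrFun hkeyM i₀) j
      rw [Matrix.mul_apply] at h
      simpa [Matrix.smul_apply, Complex.real_smul] using h
    have hF : (Q i₀ ᵥ* (B - (lam : ℂ) • 1)) j
        = (∑ k, Q i₀ k * B k j) - (lam : ℂ) * Q i₀ j := by
      simp [vecMul, dotProduct, Matrix.sub_apply, Matrix.smul_apply, Matrix.one_apply,
        mul_sub, Finset.sum_sub_distrib, mul_ite, mul_comm]
    have hsplit : (∑ k, Q i₀ k * B k j) - (lam : ℂ) * Q i₀ j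
        = (∑ k, (Q i₀ k - Qn m i₀ k) * B k j) + (lam : ℂ) * (Qn (m + 1) i₀ j - Q i₀ j) := by
      have h1 : ∑ k, (Q i₀ k - Qn m i₀ k) * B k j
          = (∑ k, Q i₀ k * B k j) - ∑ k, Qn m i₀ k * B k j := by
        rw [← Finset.sum_sub_distrib]
        exact Finset.sum_congr rfl fun k _ => sub_mul _ _ _
      rw [h1, hkeyE]
      ring
    rw [hF, hsplit]
    have hB1 : ∀ k, ‖B k j‖ ≤ 1 := by
      intro k
      rw [hBdef, Matrix.smul_apply, Complex.real_smul, norm_mul, Complex.norm_real, Real.norm_eq_abs,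
        abs_of_pos (inv_pos.mpr (hNA (m + 1)))]
      calc (matEntrySumNorm (A (m + 1)))⁻¹ * ‖A (m + 1) k j‖
          ≤ (matEntrySumNorm (A (m + 1)))⁻¹ * matEntrySumNorm (A (m + 1)) :=
            mul_le_mul_of_nonneg_left (mesn_entry_le _ _ _) (inv_nonneg.mpr (hNA _).le)
        _ = 1 := inv_mul_cancel₀ (hNA _).ne'
    have hlam1 : lam ≤ 1 := by
      rw [hlamdef]
      simp only [lamSeq, Nat.add_sub_cancel]
      rw [div_le_one (mul_pos (hNP m) (hNA (m + 1)))]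
      rw [matProd_succ]
      exact mesn_mul_le _ _
    calc ‖(∑ k, (Q i₀ k - Qn m i₀ k) * B k j) + (lam : ℂ) * (Qn (m + 1) i₀ j - Q i₀ j)‖
        ≤ ‖∑ k, (Q i₀ k - Qn m i₀ k) * B k j‖ + ‖(lam : ℂ) * (Qn (m + 1) i₀ j - Q i₀ j)‖ :=
          norm_add_le _ _
      _ ≤ (∑ k, ‖Q i₀ k - Qn m i₀ k‖) + ‖Qn (m + 1) i₀ j - Q i₀ j‖ := by
          gcongr
          · calc ‖∑ k, (Q i₀ k - Qn m i₀ k) * B k j‖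
                ≤ ∑ k, ‖(Q i₀ k - Qn m i₀ k) * B k j‖ := norm_sum_le _ _
              _ ≤ ∑ k, ‖Q i₀ k - Qn m i₀ k‖ := by
                  refine Finset.sum_le_sum fun k _ => ?_
                  rw [norm_mul]
                  exact mul_le_of_le_one_right (norm_nonneg _) (hB1 k)
          · rw [norm_mul, Complex.norm_real, Real.norm_eq_abs,
              abs_of_pos (hlam (m + 1))]
            exact mul_le_of_le_one_left (norm_nonneg _) hlam1
  · have h1 : Tendsto (fun n => ∑ k, ‖Q i₀ k - Qn (n - 1) i₀ k‖) atTop (nhds 0) := by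
      have hk : ∀ k : Fin d, Tendsto (fun n : ℕ => ‖Q i₀ k - Qn (n - 1) i₀ k‖)
          atTop (nhds 0) := by
        intro k
        have h := (hentry i₀ k).comp (tendsto_sub_atTop_nat 1)
        have hd : Tendsto (fun n : ℕ => Q i₀ k - Qn (n - 1) i₀ k) atTop (nhds 0) := by
          simpa using ((tendsto_const_nhds : Tendsto (fun _ : ℕ => Q i₀ k) atTop (nhds (Q i₀ k))).sub h)
        simpa [Function.comp_def] using (continuous_norm.tendsto 0).comp hd
      have := tendsto_finset_sum (Finset.univ : Finset (Fin d)) (fun k _ => hk k)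
      simpa using this
    have h2 : Tendsto (fun n => ‖Qn n i₀ j - Q i₀ j‖) atTop (nhds 0) := by
      have hd : Tendsto (fun n => Qn n i₀ j - Q i₀ j) atTop (nhds 0) := by
        simpa using ((hentry i₀ j).sub (tendsto_const_nhds : Tendsto (fun _ : ℕ => Q i₀ j) atTop (nhds (Q i₀ j))))
      simpa [Function.comp_def] using (continuous_norm.tendsto 0).comp hd
    simpa using h1.add h2
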